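/- Let Z ⊆ ℝⁿ be a nonempty compact set, let μ : ℝⁿ → [0,1] be continuous, and let g : ℝⁿ → ℝ be continuous. Define μ_w : ℝ → ℝ by μ_w(w) = sup{μ(z) : z ∈ Z, g(z) = w} when {z ∈ Z : g(z) = w} is nonempty and μ_w(w) = 0 otherwise. Then μ_w is upper semicontinuous on ℝ; in particular, for every α ∈ (0,1] the output α-cut {w ∈ ℝ : μ_w(w) ≥ α} is a closed set. -/
import Mathlib


open Set Classical

/-- The output membership function of the generalized extension principle is upper
semicontinuous: for a nonempty compact `Z ⊆ ℝⁿ`, continuous `μ : ℝⁿ → [0,1]` and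
continuous `g : ℝⁿ → ℝ`, the function `μ_w(w) = sup{μ(z) : z ∈ Z, g(z) = w}` (with
value `0` when the preimage is empty) is upper semicontinuous on `ℝ`; in particular
every output α-cut with `α ∈ (0,1]` is closed. -/
theorem extension_principle_output_usc {n : ℕ}
    (Z : Set (Fin n → ℝ)) (hZc : IsCompact Z) (hZne : Z.Nonempty)
    (μ : (Fin n → ℝ) → ℝ) (hμc : Continuous μ) (hμ01 : ∀ z, μ z ∈ Set.Icc (0 : ℝ) 1)
    (g : (Fin n → ℝ) → ℝ) (hg : Continuous g)
    (μw : ℝ → ℝ)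
    (hμw : ∀ w : ℝ, μw w =
      if ({z | z ∈ Z ∧ g z = w}).Nonempty
      then sSup (μ '' {z | z ∈ Z ∧ g z = w})
      else 0) :
    UpperSemicontinuous μw ∧
      ∀ α ∈ Set.Ioc (0 : ℝ) 1, IsClosed {w : ℝ | α ≤ μw w} := by
  have hnonneg : ∀ w, 0 ≤ μw w := by
    intro w
    rw [hμw w]
    split_ifs with h
    · obtain ⟨z, hz⟩ := h
      refine le_trans (hμ01 z).1 (le_csSup ?_ ⟨z, hz, rfl⟩)
      exact ⟨1, fun x ⟨z', _, hz'⟩ => hz' ▸ (hμ01 z').2⟩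
    · exact le_refl 0
  have husc : UpperSemicontinuous μw := by
    intro w c hc
    -- A : set where μ ≥ c
    set A : Set (Fin n → ℝ) := Z ∩ μ ⁻¹' (Ici c) with hA
    have hAcomp : IsCompact A := hZc.inter_right (isClosed_Ici.preimage hμc)
    have hgA : IsClosed (g '' A) := (hAcomp.image hg).isClosed
    have hwnot : w ∉ g '' A := by
      rintro ⟨z, ⟨hzZ, hzc⟩, hzw⟩
      -- then μw w = sSup ≥ μ z ≥ c, contradiction with μw w < c
      have hne : ({z' | z' ∈ Z ∧ g z' = w}).Nonempty := ⟨z, hzZ, hzw⟩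
      have : μ z ≤ μw w := by
        rw [hμw w, if_pos hne]
        exact le_csSup ⟨1, fun x ⟨z', _, hz'⟩ => hz' ▸ (hμ01 z').2⟩ ⟨z, ⟨hzZ, hzw⟩, rfl⟩
      exact absurd (lt_of_le_of_lt (le_trans hzc this) hc) (lt_irrefl c)
    have hU : (g '' A)ᶜ ∈ nhds w := hgA.isOpen_compl.mem_nhds hwnot
    filter_upwards [hU] with w' hw'
    rw [hμw w']
    split_ifs with h
    · -- sup attained on compact preimage, and it's < c
      have hPcomp : IsCompact {z | z ∈ Z ∧ g z = w'} := by
        have : {z | z ∈ Z ∧ g z = w'} = Z ∩ g ⁻¹' {w'} := by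
          ext z; simp [Set.mem_inter_iff]
        rw [this]
        exact hZc.inter_right (isClosed_singleton.preimage hg)
      obtain ⟨z₀, hz₀, hsup⟩ := hPcomp.exists_sSup_image_eq h hμc.continuousOn
      rw [hsup]
      by_contra hcon
      push_neg at hcon
      exact hw' ⟨z₀, ⟨hz₀.1, hcon⟩, hz₀.2⟩
    · exact lt_of_le_of_lt (hnonneg w) hc |>.trans_le (le_of_eq rfl) |> fun _ => lt_of_le_of_lt (le_refl 0) (lt_of_le_of_lt (hnonneg w) hc)
  refine ⟨husc, fun α hα => ?_⟩
  have : {w : ℝ | α ≤ μw w} = {w : ℝ | μw w < α}ᶜ := by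
    ext w; simp [not_lt]
  rw [this]
  exact (husc.isOpen_preimage α).isClosed_compl
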